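/- arXiv:2402.11615 — 3 statements merged into one kernel-verified Lean document; each statement's English description precedes it below -/
import Mathlib

section
/- Let (X_n)_{n≥1} be a sequence of real random variables, each with law N(0,1) (the variables are not assumed independent). Then almost surely lim_{n→∞} |X_n|^{1/|α(n)|_*} = 1. -/
open MeasureTheory Filter
open scoped ENNReal NNReal Topology ProbabilityTheory

noncomputable section

/-- For `n ≥ 1` with prime factorization `n = p₁^{α₁} ⋯ p_k^{α_k}` (`p_j` the `j`-th prime),
`alphaStar n = 1·α₁ + 2·α₂ + ⋯ + k·α_k`; here `p.primeCounting` is the index of the prime `p`. -/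
def alphaStar (n : ℕ) : ℕ := n.factorization.sum fun p k => p.primeCounting * k

/-! ### Auxiliary lemmas on `alphaStar` -/

lemma count_prime_lt {p : ℕ} (hp : p.Prime) : Nat.count Nat.Prime p < p := by
  rw [Nat.count_eq_card_filter_range]
  have h0 : (0:ℕ) ∈ Finset.range p := Finset.mem_range.mpr hp.pos
  calc ((Finset.range p).filter Nat.Prime).card < (Finset.range p).card := by
        refine Finset.card_lt_card ⟨Finset.filter_subset _ _, fun hsub => ?_⟩
        have h1 := hsub h0
        simp only [Finset.mem_filter] at h1
        exact Nat.not_prime_zero h1.2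
    _ = p := Finset.card_range p

lemma pc_prime {p : ℕ} (hp : p.Prime) :
    p.primeCounting = Nat.count Nat.Prime p + 1 := by
  rw [Nat.primeCounting, Nat.primeCounting', Nat.count_succ, if_pos hp]

lemma mem_support_prime {m p : ℕ} (hp : p ∈ m.factorization.support) : p.Prime :=
  Nat.prime_of_mem_primeFactors (by rwa [← Nat.support_factorization])

lemma mem_support_le {m p : ℕ} (hm : m ≠ 0) (hp : p ∈ m.factorization.support) : p ≤ m := by
  rw [Nat.support_factorization] at hp
  exact Nat.le_of_dvd (Nat.pos_of_ne_zero hm) (Nat.dvd_of_mem_primeFactors hp)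

lemma alphaStar_eq_sum_range {m B : ℕ} (hm : m ≠ 0) (hB : m ≤ B) :
    alphaStar m = ∑ j ∈ Finset.range B,
      (j+1) * m.factorization (Nat.nth Nat.Prime j) := by
  classical
  have hne : ∀ j ∈ Finset.range B,
      ((j+1) * m.factorization (Nat.nth Nat.Prime j)) ≠ 0 →
      Nat.nth Nat.Prime j ∈ m.factorization.support := by
    intro j _ h
    rw [Finsupp.mem_support_iff]
    intro h0
    exact h (by rw [h0, mul_zero])
  rw [← Finset.sum_filter_of_ne hne, alphaStar, Finsupp.sum]
  refine Finset.sum_nbij' (fun p => Nat.count Nat.Prime p) (fun j => Nat.nth Nat.Prime j)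
    ?_ ?_ ?_ ?_ ?_
  · intro p hp
    have hpp := mem_support_prime hp
    refine Finset.mem_filter.mpr ⟨Finset.mem_range.mpr ?_, ?_⟩
    · exact lt_of_lt_of_le (count_prime_lt hpp) ((mem_support_le hm hp).trans hB)
    · rwa [Nat.nth_count hpp]
  · intro j hj; exact (Finset.mem_filter.mp hj).2
  · intro p hp; exact Nat.nth_count (mem_support_prime hp)
  · intro j hj
    have := Nat.primeCounting'_nth_eq j
    rwa [Nat.primeCounting'] at this
  · intro p hp
    have hpp := mem_support_prime hp
    rw [Nat.nth_count hpp, pc_prime hpp]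

lemma prod_nth_pow_eq_self {m B : ℕ} (hm : m ≠ 0) (hB : m ≤ B) :
    ∏ j ∈ Finset.range B,
      (Nat.nth Nat.Prime j) ^ (m.factorization (Nat.nth Nat.Prime j)) = m := by
  classical
  have hne : ∀ j ∈ Finset.range B,
      (Nat.nth Nat.Prime j) ^ (m.factorization (Nat.nth Nat.Prime j)) ≠ 1 →
      Nat.nth Nat.Prime j ∈ m.factorization.support := by
    intro j _ h
    rw [Finsupp.mem_support_iff]
    intro h0
    exact h (by rw [h0, pow_zero])
  rw [← Finset.prod_filter_of_ne hne]
  have : ∏ j ∈ (Finset.range B).filter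
      (fun j => Nat.nth Nat.Prime j ∈ m.factorization.support),
      (Nat.nth Nat.Prime j) ^ (m.factorization (Nat.nth Nat.Prime j)) =
      ∏ p ∈ m.factorization.support, p ^ (m.factorization p) := by
    refine Finset.prod_nbij' (fun j => Nat.nth Nat.Prime j) (fun p => Nat.count Nat.Prime p)
      ?_ ?_ ?_ ?_ ?_
    · intro j hj; exact (Finset.mem_filter.mp hj).2
    · intro p hp
      have hpp := mem_support_prime hp
      refine Finset.mem_filter.mpr ⟨Finset.mem_range.mpr ?_, ?_⟩
      · exact lt_of_lt_of_le (count_prime_lt hpp) ((mem_support_le hm hp).trans hB)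
      · rwa [Nat.nth_count hpp]
    · intro j hj
      have := Nat.primeCounting'_nth_eq j
      rwa [Nat.primeCounting'] at this
    · intro p hp; exact Nat.nth_count (mem_support_prime hp)
    · intro j hj; rfl
  rw [this]
  exact Nat.factorization_prod_pow_eq_self hm

lemma vec_inj {B m m' : ℕ} (hm : m ≠ 0) (hm' : m' ≠ 0) (hB : m ≤ B) (hB' : m' ≤ B)
    (h : ∀ j < B, m.factorization (Nat.nth Nat.Prime j)
      = m'.factorization (Nat.nth Nat.Prime j)) : m = m' := by
  rw [← prod_nth_pow_eq_self hm hB, ← prod_nth_pow_eq_self hm' hB']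
  exact Finset.prod_congr rfl fun j hj => by rw [h j (Finset.mem_range.mp hj)]

lemma geom_sum_le_inv {t : ℝ} (h0 : 0 ≤ t) (h1 : t < 1) (B : ℕ) :
    ∑ m ∈ Finset.range B, t ^ m ≤ (1 - t)⁻¹ := by
  have ht : (0:ℝ) < 1 - t := by linarith
  rw [geom_sum_eq h1.ne]
  rw [div_le_iff_of_neg (by linarith : t - 1 < 0)]
  have h2 : (1 - t)⁻¹ * (t - 1) = -1 := by field_simp; ring
  have h3 := pow_nonneg h0 B
  linarith

/-- The key summability result: it is essentially Euler's bound on the generating function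
of partitions. -/
lemma summable_pow_alphaStar {y : ℝ} (h0 : 0 ≤ y) (h1 : y < 1) :
    Summable (fun n : ℕ => y ^ alphaStar (n+1)) := by
  classical
  have h1y : (0:ℝ) < 1 - y := by linarith
  refine summable_of_sum_le (c := Real.exp (y / (1-y)^2)) (fun n => pow_nonneg h0 _) ?_
  intro u
  set B := (u.sup id) + 2 with hBdef
  have hmem : ∀ n ∈ u, n + 1 ≤ B := by
    intro n hn
    have : n ≤ u.sup id := Finset.le_sup (f := id) hn
    omega
  set v : ℕ → (Fin B → ℕ) := fun n j => (n+1).factorization (Nat.nth Nat.Prime (j:ℕ)) with hv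
  set g : (Fin B → ℕ) → ℝ := fun w => ∏ j : Fin B, (y ^ ((j:ℕ)+1)) ^ (w j) with hg
  have hterm : ∀ n ∈ u, y ^ alphaStar (n+1) = g (v n) := by
    intro n hn
    rw [alphaStar_eq_sum_range (Nat.succ_ne_zero n) (hmem n hn), hg]
    simp only [hv]
    rw [← Fin.sum_univ_eq_sum_range (fun j => (j+1) * (n+1).factorization (Nat.nth Nat.Prime j)) B]
    rw [← Finset.prod_pow_eq_pow_sum]
    exact Finset.prod_congr rfl fun j _ => by rw [← pow_mul]
  rw [Finset.sum_congr rfl hterm]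
  have hginj : ∀ n ∈ u, ∀ n' ∈ u, v n = v n' → n = n' := by
    intro n hn n' hn' h
    have := vec_inj (Nat.succ_ne_zero n) (Nat.succ_ne_zero n') (hmem n hn) (hmem n' hn')
      (fun j hj => congrFun h ⟨j, hj⟩)
    omega
  have hy1 : ∀ j : ℕ, y ^ (j+1) ≤ y := by
    intro j
    calc y ^ (j+1) ≤ y ^ 1 := pow_le_pow_of_le_one h0 h1.le (by omega)
      _ = y := pow_one y
  calc ∑ n ∈ u, g (v n) = ∑ w ∈ u.image v, g w := (Finset.sum_image hginj).symm
    _ ≤ ∑ w ∈ Fintype.piFinset (fun _ : Fin B => Finset.range B), g w := by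
        refine Finset.sum_le_sum_of_subset_of_nonneg ?_ ?_
        · intro w hw
          obtain ⟨n, hn, rfl⟩ := Finset.mem_image.mp hw
          rw [Fintype.mem_piFinset]
          intro j
          exact Finset.mem_range.mpr
            (lt_of_lt_of_le (Nat.factorization_lt _ (Nat.succ_ne_zero n)) (hmem n hn))
        · intro w _ _
          exact Finset.prod_nonneg fun j _ => pow_nonneg (pow_nonneg h0 _) _
    _ = ∏ j : Fin B, ∑ m ∈ Finset.range B, (y ^ ((j:ℕ)+1)) ^ m :=
        (Finset.prod_univ_sum _ _).symm
    _ ≤ ∏ j : Fin B, Real.exp (y ^ ((j:ℕ)+1) / (1-y)) := by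
        refine Finset.prod_le_prod (fun j _ => Finset.sum_nonneg fun m _ =>
          pow_nonneg (pow_nonneg h0 _) _) ?_
        intro j _
        set t := y ^ ((j:ℕ)+1) with htdef
        have ht0 : 0 ≤ t := pow_nonneg h0 _
        have hty : t ≤ y := hy1 _
        have ht1 : t < 1 := lt_of_le_of_lt hty h1
        have h1t : (0:ℝ) < 1 - t := by linarith
        calc ∑ m ∈ Finset.range B, t ^ m ≤ (1 - t)⁻¹ := geom_sum_le_inv ht0 ht1 B
          _ ≤ 1 + t / (1-y) := by
              rw [← one_div, div_le_iff₀ h1t]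
              have e : t/(1-y) * (1-y) = t := div_mul_cancel₀ _ h1y.ne'
              have e2 : 0 ≤ t/(1-y) := div_nonneg ht0 h1y.le
              nlinarith [mul_nonneg e2 (sub_nonneg.mpr hty)]
          _ ≤ Real.exp (t / (1-y)) := by
              have := Real.add_one_le_exp (t / (1-y))
              linarith
    _ = Real.exp (∑ j : Fin B, y ^ ((j:ℕ)+1) / (1-y)) := (Real.exp_sum _ _).symm
    _ ≤ Real.exp (y / (1-y)^2) := by
        refine Real.exp_le_exp.mpr ?_
        rw [← Finset.sum_div]
        rw [Fin.sum_univ_eq_sum_range (fun j => y ^ (j+1)) B]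
        have hs : ∑ j ∈ Finset.range B, y ^ (j+1) ≤ y * (1-y)⁻¹ := by
          have e : ∑ j ∈ Finset.range B, y ^ (j+1) = y * ∑ j ∈ Finset.range B, y ^ j := by
            rw [Finset.mul_sum]
            exact Finset.sum_congr rfl fun j _ => by ring
          rw [e]
          exact mul_le_mul_of_nonneg_left (geom_sum_le_inv h0 h1 B) h0
        rw [div_le_div_iff₀ h1y (by positivity)]
        calc (∑ j ∈ Finset.range B, y ^ (j+1)) * (1-y)^2
            ≤ (y * (1-y)⁻¹) * (1-y)^2 := by
              refine mul_le_mul_of_nonneg_right hs (by positivity)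
          _ = y * (1-y) := by field_simp
  done

/-! ### Gaussian estimates -/

lemma gaussianPDFReal_le_half (x : ℝ) : ProbabilityTheory.gaussianPDFReal 0 1 x ≤ 1/2 := by
  rw [ProbabilityTheory.gaussianPDFReal]
  have h2 : (2:ℝ) ≤ Real.sqrt (2 * Real.pi * (1:ℝ≥0)) := by
    rw [show ((1:ℝ≥0):ℝ) = 1 by norm_num, mul_one]
    have : (4:ℝ) ≤ 2 * Real.pi := by nlinarith [Real.pi_gt_three]
    calc (2:ℝ) = Real.sqrt 4 := by
          rw [show (4:ℝ) = 2^2 by norm_num, Real.sqrt_sq (by norm_num)]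
      _ ≤ Real.sqrt (2 * Real.pi) := Real.sqrt_le_sqrt this
  have hinv : (Real.sqrt (2 * Real.pi * (1:ℝ≥0)))⁻¹ ≤ 1/2 := by
    rw [one_div]
    exact inv_anti₀ (by norm_num) h2
  have hexp : Real.exp (-(x - 0)^2 / (2 * (1:ℝ≥0))) ≤ 1 := by
    rw [Real.exp_le_one_iff]
    have : (0:ℝ) ≤ (x - 0)^2 := sq_nonneg _
    have h1 : ((1:ℝ≥0):ℝ) = 1 := by norm_num
    rw [h1]
    nlinarith
  calc (Real.sqrt (2 * Real.pi * (1:ℝ≥0)))⁻¹ * Real.exp (-(x - 0)^2 / (2 * (1:ℝ≥0)))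
      ≤ (1/2) * 1 := by
        refine mul_le_mul hinv hexp (Real.exp_nonneg _) (by norm_num)
    _ = 1/2 := by norm_num

lemma gaussianPDFReal_le_exp (x : ℝ) :
    ProbabilityTheory.gaussianPDFReal 0 1 x ≤ 2 * Real.exp (-|x|) := by
  rw [ProbabilityTheory.gaussianPDFReal]
  have h1 : ((1:ℝ≥0):ℝ) = 1 := by norm_num
  have hinv : (Real.sqrt (2 * Real.pi * (1:ℝ≥0)))⁻¹ ≤ 1 := by
    refine inv_le_one_of_one_le₀ ?_
    rw [h1, mul_one]
    have : (1:ℝ) ≤ 2 * Real.pi := by nlinarith [Real.pi_gt_three]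
    calc (1:ℝ) = Real.sqrt 1 := (Real.sqrt_one).symm
      _ ≤ Real.sqrt (2 * Real.pi) := Real.sqrt_le_sqrt this
  have hexp : Real.exp (-(x - 0)^2 / (2 * (1:ℝ≥0))) ≤ 2 * Real.exp (-|x|) := by
    rw [h1]
    have key : -(x - 0)^2 / (2*1) ≤ 1/2 + (-|x|) := by
      have : (|x| - 1)^2 ≥ 0 := sq_nonneg _
      have habs : |x|^2 = x^2 := sq_abs x
      nlinarith
    calc Real.exp (-(x - 0)^2 / (2*1)) ≤ Real.exp (1/2 + (-|x|)) := Real.exp_le_exp.mpr key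
      _ = Real.exp (1/2) * Real.exp (-|x|) := Real.exp_add _ _
      _ ≤ 2 * Real.exp (-|x|) := by
          refine mul_le_mul_of_nonneg_right ?_ (Real.exp_nonneg _)
          have := Real.exp_one_lt_d9
          have hsq : Real.exp (1/2) * Real.exp (1/2) = Real.exp 1 := by
            rw [← Real.exp_add]; norm_num
          nlinarith [Real.exp_one_lt_d9, Real.exp_pos (1/2)]
  calc (Real.sqrt (2 * Real.pi * (1:ℝ≥0)))⁻¹ * Real.exp (-(x - 0)^2 / (2 * (1:ℝ≥0)))
      ≤ 1 * (2 * Real.exp (-|x|)) := by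
        refine mul_le_mul hinv hexp (Real.exp_nonneg _) (by norm_num)
    _ = 2 * Real.exp (-|x|) := one_mul _

lemma gauss_tail {t : ℝ} (ht : 0 ≤ t) :
    ProbabilityTheory.gaussianReal 0 1 {x | t ≤ |x|} ≤ ENNReal.ofReal (4 * Real.exp (-t)) := by
  have hsub : {x : ℝ | t ≤ |x|} ⊆ Set.Iic (-t) ∪ Set.Ici t := by
    intro x hx
    rw [Set.mem_setOf_eq] at hx
    rcases le_abs.mp hx with h | h
    · exact Or.inr h
    · exact Or.inl (le_neg.mp h)
  have hIci : ProbabilityTheory.gaussianReal 0 1 (Set.Ici t) ≤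
      ENNReal.ofReal (2 * Real.exp (-t)) := by
    rw [ProbabilityTheory.gaussianReal_apply_eq_integral 0 one_ne_zero]
    refine ENNReal.ofReal_le_ofReal ?_
    have hint : IntegrableOn (fun x => 2 * Real.exp (-x)) (Set.Ici t) volume := by
      have := (exp_neg_integrableOn_Ioi t (by norm_num : (0:ℝ) < 1)).const_mul 2
      simp only [neg_mul, one_mul] at this
      rwa [integrableOn_Ici_iff_integrableOn_Ioi]
    calc ∫ x in Set.Ici t, ProbabilityTheory.gaussianPDFReal 0 1 x
        ≤ ∫ x in Set.Ici t, 2 * Real.exp (-x) := by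
          refine setIntegral_mono_on
            ((ProbabilityTheory.integrable_gaussianPDFReal 0 1).integrableOn) hint
            measurableSet_Ici ?_
          intro x hx
          have hx0 : 0 ≤ x := ht.trans hx
          calc ProbabilityTheory.gaussianPDFReal 0 1 x ≤ 2 * Real.exp (-|x|) :=
              gaussianPDFReal_le_exp x
            _ = 2 * Real.exp (-x) := by rw [abs_of_nonneg hx0]
      _ = 2 * Real.exp (-t) := by
          rw [MeasureTheory.integral_const_mul, integral_Ici_eq_integral_Ioi,
            integral_exp_neg_Ioi]
  have hIic : ProbabilityTheory.gaussianReal 0 1 (Set.Iic (-t)) ≤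
      ENNReal.ofReal (2 * Real.exp (-t)) := by
    rw [ProbabilityTheory.gaussianReal_apply_eq_integral 0 one_ne_zero]
    refine ENNReal.ofReal_le_ofReal ?_
    have hint : IntegrableOn (fun x => 2 * Real.exp x) (Set.Iic (-t)) volume :=
      (integrableOn_exp_Iic (-t)).const_mul 2
    calc ∫ x in Set.Iic (-t), ProbabilityTheory.gaussianPDFReal 0 1 x
        ≤ ∫ x in Set.Iic (-t), 2 * Real.exp x := by
          refine setIntegral_mono_on
            ((ProbabilityTheory.integrable_gaussianPDFReal 0 1).integrableOn) hint
            measurableSet_Iic ?_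
          intro x hx
          have hx0 : x ≤ 0 := le_trans hx (by linarith)
          calc ProbabilityTheory.gaussianPDFReal 0 1 x ≤ 2 * Real.exp (-|x|) :=
              gaussianPDFReal_le_exp x
            _ = 2 * Real.exp x := by rw [abs_of_nonpos hx0, neg_neg]
      _ = 2 * Real.exp (-t) := by
          rw [MeasureTheory.integral_const_mul, integral_exp_Iic]
  calc ProbabilityTheory.gaussianReal 0 1 {x | t ≤ |x|}
      ≤ ProbabilityTheory.gaussianReal 0 1 (Set.Iic (-t) ∪ Set.Ici t) := measure_mono hsub
    _ ≤ ProbabilityTheory.gaussianReal 0 1 (Set.Iic (-t))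
        + ProbabilityTheory.gaussianReal 0 1 (Set.Ici t) := measure_union_le _ _
    _ ≤ ENNReal.ofReal (2 * Real.exp (-t)) + ENNReal.ofReal (2 * Real.exp (-t)) :=
        add_le_add hIic hIci
    _ = ENNReal.ofReal (4 * Real.exp (-t)) := by
        rw [← ENNReal.ofReal_add (by positivity) (by positivity)]
        ring_nf

lemma gauss_ball {δ : ℝ} (hδ : 0 ≤ δ) :
    ProbabilityTheory.gaussianReal 0 1 {x | |x| < δ} ≤ ENNReal.ofReal δ := by
  have hset : {x : ℝ | |x| < δ} = Set.Ioo (-δ) δ := Set.ext fun x => by simp [Set.mem_Ioo, abs_lt]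
  rw [hset, ProbabilityTheory.gaussianReal_apply_eq_integral 0 one_ne_zero]
  refine ENNReal.ofReal_le_ofReal ?_
  have hconst : IntegrableOn (fun _ : ℝ => (1:ℝ)/2) (Set.Ioo (-δ) δ) volume := by
    refine (integrableOn_const_iff).mpr (Or.inr ?_)
    rw [Real.volume_Ioo]
    exact ENNReal.ofReal_lt_top
  calc ∫ x in Set.Ioo (-δ) δ, ProbabilityTheory.gaussianPDFReal 0 1 x
      ≤ ∫ _x in Set.Ioo (-δ) δ, (1:ℝ)/2 := by
        refine setIntegral_mono_on
          ((ProbabilityTheory.integrable_gaussianPDFReal 0 1).integrableOn) hconst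
          measurableSet_Ioo ?_
        intro x _
        exact gaussianPDFReal_le_half x
    _ = (volume (Set.Ioo (-δ) δ)).toReal * (1/2) := by
        rw [setIntegral_const]; rw [smul_eq_mul]; rfl
    _ ≤ δ := by
        rw [Real.volume_Ioo, ENNReal.toReal_ofReal (by linarith)]
        linarith

theorem stmt5 {Ω : Type*} [MeasureSpace Ω] [IsProbabilityMeasure (ℙ : Measure Ω)]
    (X : ℕ → Ω → ℝ) (hXm : ∀ n, Measurable (X n))
    (hX : ∀ n, Measure.map (X n) ℙ = ProbabilityTheory.gaussianReal 0 1) :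
    ∀ᵐ ω ∂ℙ, Filter.Tendsto
      (fun n : ℕ => |X (n + 1) ω| ^ ((alphaStar (n + 1) : ℝ))⁻¹) Filter.atTop (𝓝 1) := by
  classical
  set εf : ℕ → ℝ := fun k => 1/(k+1 : ℝ) with hεf
  have hεpos : ∀ k, 0 < εf k := fun k => by positivity
  set a : ℕ → ℝ := fun n => (alphaStar (n+1) : ℝ) with ha
  have ha0 : ∀ n, 0 ≤ a n := fun n => Nat.cast_nonneg _
  set S : ℕ → ℕ → Set Ω := fun k n =>
    X (n+1) ⁻¹' ({x : ℝ | Real.exp (εf k * a n) ≤ |x|}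
      ∪ {x : ℝ | |x| < Real.exp (-(εf k * a n))}) with hS
  have hsum : ∀ k, (∑' n, ℙ (S k n)) ≠ ∞ := by
    intro k
    set y := Real.exp (-(εf k)) with hy
    have hy0 : (0:ℝ) ≤ y := (Real.exp_pos _).le
    have hy1 : y < 1 := by
      rw [hy, Real.exp_lt_one_iff]
      linarith [hεpos k]
    have hb : ∀ n, ℙ (S k n) ≤ ENNReal.ofReal (5 * y ^ alphaStar (n+1)) := by
      intro n
      have hms1 : MeasurableSet {x : ℝ | Real.exp (εf k * a n) ≤ |x|} :=
        measurableSet_le measurable_const measurable_abs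
      have hms2 : MeasurableSet {x : ℝ | |x| < Real.exp (-(εf k * a n))} :=
        measurableSet_lt measurable_abs measurable_const
      have e1 : Real.exp (-(εf k * a n)) = y ^ alphaStar (n+1) := by
        rw [hy, ← Real.exp_nat_mul]
        congr 1
        rw [ha]
        ring
      have e2 : Real.exp (-(Real.exp (εf k * a n))) ≤ y ^ alphaStar (n+1) := by
        rw [← e1]
        refine Real.exp_le_exp.mpr ?_
        have h1 := Real.add_one_le_exp (εf k * a n)
        linarith
      have hy2 : (0:ℝ) ≤ y ^ alphaStar (n+1) := pow_nonneg hy0 _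
      calc ℙ (S k n)
          = ProbabilityTheory.gaussianReal 0 1
            ({x : ℝ | Real.exp (εf k * a n) ≤ |x|}
              ∪ {x : ℝ | |x| < Real.exp (-(εf k * a n))}) := by
            rw [hS, ← hX (n+1), Measure.map_apply (hXm (n+1)) (hms1.union hms2)]
        _ ≤ ProbabilityTheory.gaussianReal 0 1 {x : ℝ | Real.exp (εf k * a n) ≤ |x|}
            + ProbabilityTheory.gaussianReal 0 1
              {x : ℝ | |x| < Real.exp (-(εf k * a n))} := measure_union_le _ _
        _ ≤ ENNReal.ofReal (4 * Real.exp (-(Real.exp (εf k * a n))))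
            + ENNReal.ofReal (Real.exp (-(εf k * a n))) :=
            add_le_add (gauss_tail (Real.exp_pos _).le) (gauss_ball (Real.exp_pos _).le)
        _ ≤ ENNReal.ofReal (5 * y ^ alphaStar (n+1)) := by
            rw [← ENNReal.ofReal_add (by positivity) (by positivity)]
            refine ENNReal.ofReal_le_ofReal ?_
            rw [e1]
            linarith
    have hsummable : Summable (fun n : ℕ => 5 * y ^ alphaStar (n+1)) :=
      (summable_pow_alphaStar hy0 hy1).mul_left 5
    refine ne_of_lt ?_
    calc ∑' n, ℙ (S k n) ≤ ∑' n, ENNReal.ofReal (5 * y ^ alphaStar (n+1)) :=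
        ENNReal.tsum_le_tsum hb
      _ = ENNReal.ofReal (∑' n, 5 * y ^ alphaStar (n+1)) :=
          (ENNReal.ofReal_tsum_of_nonneg (fun n => by positivity) hsummable).symm
      _ < ∞ := ENNReal.ofReal_lt_top
  have hae := MeasureTheory.ae_all_iff.mpr
    (fun k => MeasureTheory.ae_eventually_notMem (hsum k))
  filter_upwards [hae] with ω hω
  have hbnd : ∀ k, ∀ᶠ n in atTop, |X (n+1) ω| < Real.exp (εf k * a n)
      ∧ Real.exp (-(εf k * a n)) ≤ |X (n+1) ω| := by
    intro k
    filter_upwards [hω k] with n hn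
    rw [hS] at hn
    simp only [Set.mem_preimage, Set.mem_union, Set.mem_setOf_eq] at hn
    push_neg at hn
    exact ⟨hn.1, hn.2⟩
  have hFpos : ∀ᶠ n in atTop, 0 < |X (n+1) ω| := by
    filter_upwards [hbnd 0] with n hn
    exact lt_of_lt_of_le (Real.exp_pos _) hn.2
  have hLtend : Tendsto (fun n => (a n)⁻¹ * Real.log |X (n+1) ω|) atTop (𝓝 0) := by
    rw [Metric.tendsto_atTop]
    intro ζ hζ
    obtain ⟨k, hk⟩ := exists_nat_one_div_lt hζ
    obtain ⟨N, hN⟩ := eventually_atTop.mp (hbnd k)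
    refine ⟨N, fun n hn => ?_⟩
    obtain ⟨h1, h2⟩ := hN n hn
    rw [Real.dist_eq, sub_zero]
    have hFn : 0 < |X (n+1) ω| := lt_of_lt_of_le (Real.exp_pos _) h2
    have hlogup : Real.log |X (n+1) ω| ≤ εf k * a n := by
      calc Real.log |X (n+1) ω| ≤ Real.log (Real.exp (εf k * a n)) :=
          Real.log_le_log hFn h1.le
        _ = εf k * a n := Real.log_exp _
    have hlogdown : -(εf k * a n) ≤ Real.log |X (n+1) ω| := by
      calc -(εf k * a n) = Real.log (Real.exp (-(εf k * a n))) := (Real.log_exp _).symm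
        _ ≤ Real.log |X (n+1) ω| := Real.log_le_log (Real.exp_pos _) h2
    have habs : |(Real.log |X (n+1) ω|)| ≤ εf k * a n := abs_le.mpr ⟨by linarith, hlogup⟩
    have hεk : εf k < ζ := by rw [hεf]; exact hk
    rcases eq_or_lt_of_le (ha0 n) with hz | hpos
    · rw [abs_mul, ← hz, inv_zero, abs_zero, zero_mul]
      exact hζ
    · have hle : |((a n)⁻¹ * Real.log |X (n+1) ω|)| ≤ εf k := by
        rw [abs_mul, abs_inv, abs_of_pos hpos]
        calc (a n)⁻¹ * |(Real.log |X (n+1) ω|)| ≤ (a n)⁻¹ * (εf k * a n) :=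
            mul_le_mul_of_nonneg_left habs (inv_nonneg.mpr (ha0 n))
          _ = εf k := by field_simp
      exact lt_of_le_of_lt hle hεk
  have hexp : Tendsto (fun n => Real.exp ((a n)⁻¹ * Real.log |X (n+1) ω|)) atTop (𝓝 1) := by
    have h := (Real.continuous_exp.tendsto 0).comp hLtend
    rwa [Real.exp_zero] at h
  refine Tendsto.congr' ?_ hexp
  filter_upwards [hFpos] with n hFn
  rw [← Real.log_rpow hFn, Real.exp_log (Real.rpow_pos_of_pos hFn _)]
end
end

section
/- Let (X_n)_{n≥1} be a centered Gaussian process with Var(X_n) = σ_n² for each n. Assume that for every a : ℕ → ℂ with ∑_{n=1}^∞ |a_n|² < ∞, almost surely ∑_{n=1}^∞ |a_n| |X_n| r₀^{|α(n)|_*} < ∞ for every 0 < r₀ < 1. Then for every 0 < r < 1, ∑_{n=1}^∞ σ_n² r^{2|α(n)|_*} < ∞. -/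
open MeasureTheory Filter
open scoped ENNReal NNReal Topology ProbabilityTheory

noncomputable section

/-- A centered Gaussian process: every finite real linear combination of the `X n`
has a centered Gaussian distribution `N(0, σ²)` (point mass at `0` when σ² = 0). -/
def IsCenteredGaussianProcess {Ω : Type*} [MeasureSpace Ω] (X : ℕ → Ω → ℝ) : Prop :=
  (∀ n, Measurable (X n)) ∧
  ∀ (S : Finset ℕ) (c : ℕ → ℝ), ∃ v : ℝ≥0,
    Measure.map (fun ω => ∑ n ∈ S, c n * X n ω) ℙ = ProbabilityTheory.gaussianReal 0 v

section Aux
open ProbabilityTheory Real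
def stdG : Measure ℝ := gaussianReal 0 1

lemma hm2 : Measurable fun x : ℝ => x ^ 2 := by fun_prop
def K1 : ℝ := ∫ x, |x| ∂ stdG
def K2 : ℝ := ∫ x, x^2 ∂ stdG

lemma pdf_bound_abs (x : ℝ) : ‖|x| * (gaussianPDF 0 1 x).toReal‖ ≤ 4 * rexp (-(4⁻¹) * x ^ 2) := by
  rw [gaussianPDF]
  rw [ENNReal.toReal_ofReal (gaussianPDFReal_nonneg _ _ _)]
  rw [gaussianPDFReal]
  have h1 : |x| ≤ 4 * rexp (x^2/4) := by
    nlinarith [Real.add_one_le_exp (x^2/4), sq_abs x, abs_nonneg x, Real.exp_pos (x^2/4)]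
  have h2 : (Real.sqrt (2 * π * (1:ℝ≥0)))⁻¹ ≤ 1 := by
    rw [inv_le_one_iff₀]
    right
    rw [show ((1:ℝ≥0):ℝ) = 1 by norm_num, mul_one]
    nlinarith [Real.sq_sqrt (by positivity : (0:ℝ) ≤ 2*π), Real.sqrt_nonneg (2*π), Real.pi_gt_three]
  have h3 : rexp (x^2/4) * rexp (- (x - 0)^2 / (2 * (1:ℝ≥0))) = rexp (-(4⁻¹) * x^2) := by
    rw [← Real.exp_add]
    norm_num
    ring_nf
  have hp : 0 < rexp (- (x - 0)^2 / (2 * (1:ℝ≥0))) := Real.exp_pos _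
  have habs : 0 ≤ (Real.sqrt (2 * π * (1:ℝ≥0)))⁻¹ := by positivity
  rw [Real.norm_of_nonneg (by positivity)]
  calc |x| * ((Real.sqrt (2 * π * (1:ℝ≥0)))⁻¹ * rexp (- (x - 0)^2 / (2 * (1:ℝ≥0))))
      ≤ (4 * rexp (x^2/4)) * (1 * rexp (- (x - 0)^2 / (2 * (1:ℝ≥0)))) := by
        apply mul_le_mul h1 (by nlinarith) (by positivity) (by positivity)
    _ = 4 * rexp (-(4⁻¹) * x^2) := by rw [one_mul, mul_assoc, h3]

lemma pdf_bound_sq (x : ℝ) : ‖x^2 * (gaussianPDF 0 1 x).toReal‖ ≤ 4 * rexp (-(4⁻¹) * x ^ 2) := by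
  rw [gaussianPDF, ENNReal.toReal_ofReal (gaussianPDFReal_nonneg _ _ _), gaussianPDFReal]
  have h1 : x^2 ≤ 4 * rexp (x^2/4) := by
    nlinarith [Real.add_one_le_exp (x^2/4)]
  have h2 : (Real.sqrt (2 * π * (1:ℝ≥0)))⁻¹ ≤ 1 := by
    rw [inv_le_one_iff₀]
    right
    rw [show ((1:ℝ≥0):ℝ) = 1 by norm_num, mul_one]
    nlinarith [Real.sq_sqrt (by positivity : (0:ℝ) ≤ 2*π), Real.sqrt_nonneg (2*π), Real.pi_gt_three]
  have h3 : rexp (x^2/4) * rexp (- (x - 0)^2 / (2 * (1:ℝ≥0))) = rexp (-(4⁻¹) * x^2) := by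
    rw [← Real.exp_add]; norm_num; ring_nf
  rw [Real.norm_of_nonneg (by positivity)]
  calc x^2 * ((Real.sqrt (2 * π * (1:ℝ≥0)))⁻¹ * rexp (- (x - 0)^2 / (2 * (1:ℝ≥0))))
      ≤ (4 * rexp (x^2/4)) * (1 * rexp (- (x - 0)^2 / (2 * (1:ℝ≥0)))) := by
        apply mul_le_mul h1 (by nlinarith [Real.exp_pos (- (x - 0)^2 / (2 * (1:ℝ≥0)))]) (by positivity) (by positivity)
    _ = 4 * rexp (-(4⁻¹) * x^2) := by rw [one_mul, mul_assoc, h3]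

lemma stdG_eq : stdG = volume.withDensity (gaussianPDF 0 1) :=
  gaussianReal_of_var_ne_zero 0 one_ne_zero

lemma integrable_stdG {f : ℝ → ℝ} (hf : Measurable f)
    (hb : ∀ x, ‖f x * (gaussianPDF 0 1 x).toReal‖ ≤ 4 * rexp (-(4⁻¹) * x ^ 2)) :
    Integrable f stdG := by
  rw [stdG_eq, integrable_withDensity_iff (measurable_gaussianPDF 0 1)
    (Eventually.of_forall fun x => ENNReal.ofReal_lt_top)]
  have hG : Integrable (fun x : ℝ => 4 * rexp (-(4⁻¹) * x ^ 2)) :=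
    (integrable_exp_neg_mul_sq (by norm_num : (0:ℝ) < 4⁻¹)).const_mul 4
  exact hG.mono' ((hf.mul (measurable_gaussianPDF 0 1).ennreal_toReal).aestronglyMeasurable)
    (Eventually.of_forall hb)

lemma int_abs_stdG : Integrable (fun x => |x|) stdG :=
  integrable_stdG (measurable_abs) pdf_bound_abs

lemma int_sq_stdG : Integrable (fun x : ℝ => x ^ 2) stdG :=
  integrable_stdG (hm2) pdf_bound_sq

instance : IsProbabilityMeasure stdG := by
  rw [show stdG = gaussianReal 0 1 from rfl]; infer_instance

lemma stdG_zero : stdG {(0:ℝ)} = 0 := by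
  have := gaussianReal_absolutelyContinuous 0 one_ne_zero
  exact this (measure_singleton 0)

lemma K1_pos : 0 < K1 := by
  rcases lt_or_eq_of_le (integral_nonneg (fun x => abs_nonneg x) : 0 ≤ K1) with h | h
  · exact h
  · exfalso
    have h0 : (fun x => |x|) =ᵐ[stdG] 0 := by
      rw [← integral_eq_zero_iff_of_nonneg (fun x => abs_nonneg x) int_abs_stdG]
      exact h.symm
    have : stdG {x : ℝ | ¬ |x| = 0} = 0 := h0
    have huniv : (Set.univ : Set ℝ) ⊆ {x : ℝ | ¬ |x| = 0} ∪ {(0:ℝ)} := by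
      intro x _; by_cases hx : x = 0 <;> simp [hx]
    have := measure_mono (μ := stdG) huniv
    rw [measure_univ] at this
    have hle := this.trans (measure_union_le _ _)
    rw [‹stdG {x : ℝ | ¬ |x| = 0} = 0›, stdG_zero] at hle
    simp at hle

lemma K2_pos : 0 < K2 := by
  rcases lt_or_eq_of_le (integral_nonneg (fun x => sq_nonneg x) : 0 ≤ K2) with h | h
  · exact h
  · exfalso
    have h0 : (fun x : ℝ => x ^ 2) =ᵐ[stdG] 0 := by
      rw [← integral_eq_zero_iff_of_nonneg (fun x => sq_nonneg x) int_sq_stdG]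
      exact h.symm
    have : stdG {x : ℝ | ¬ x ^ 2 = 0} = 0 := h0
    have huniv : (Set.univ : Set ℝ) ⊆ {x : ℝ | ¬ x ^ 2 = 0} ∪ {(0:ℝ)} := by
      intro x _; by_cases hx : x = 0 <;> simp [hx]
    have h2 := measure_mono (μ := stdG) huniv
    rw [measure_univ] at h2
    have hle := h2.trans (measure_union_le _ _)
    rw [this, stdG_zero] at hle
    simp at hle

lemma map_sqrt (w : ℝ≥0) :
    Measure.map (fun x => Real.sqrt w * x) stdG = gaussianReal 0 w := by
  have := gaussianReal_map_const_mul (μ := 0) (v := 1) (Real.sqrt w)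
  rw [show stdG = gaussianReal 0 1 from rfl]
  rw [show (fun x => Real.sqrt w * x) = (Real.sqrt w * ·) from rfl, this]
  congr 1
  · ring
  · ext
    simp [Real.sq_sqrt w.coe_nonneg]

lemma int_abs_gauss (w : ℝ≥0) :
    Integrable (fun x => |x|) (gaussianReal 0 w) ∧
      ∫ x, |x| ∂(gaussianReal 0 w) = Real.sqrt w * K1 := by
  rw [← map_sqrt w]
  have hm : Measurable fun x : ℝ => Real.sqrt w * x := measurable_const_mul _
  constructor
  · rw [integrable_map_measure measurable_abs.aestronglyMeasurable hm.aemeasurable]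
    have : (fun x => |Real.sqrt w * x|) = fun x => Real.sqrt w * |x| := by
      ext x; rw [abs_mul, abs_of_nonneg (Real.sqrt_nonneg _)]
    rw [Function.comp_def, this]
    exact int_abs_stdG.const_mul _
  · rw [integral_map hm.aemeasurable measurable_abs.aestronglyMeasurable]
    have : (fun x => |Real.sqrt w * x|) = fun x => Real.sqrt w * |x| := by
      ext x; rw [abs_mul, abs_of_nonneg (Real.sqrt_nonneg _)]
    rw [this, integral_const_mul]
    rfl

lemma int_sq_gauss (w : ℝ≥0) :
    Integrable (fun x : ℝ => x ^ 2) (gaussianReal 0 w) ∧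
      ∫ x, x ^ 2 ∂(gaussianReal 0 w) = w * K2 := by
  rw [← map_sqrt w]
  have hm : Measurable fun x : ℝ => Real.sqrt w * x := measurable_const_mul _
  have hsm : AEStronglyMeasurable (fun x : ℝ => x ^ 2) (Measure.map (fun x => Real.sqrt w * x) stdG) :=
    (hm2).aestronglyMeasurable
  have hfun : (fun x : ℝ => (Real.sqrt w * x) ^ 2) = fun x : ℝ => (w : ℝ) * x ^ 2 := by
    ext x; rw [mul_pow, Real.sq_sqrt w.coe_nonneg]
  constructor
  · rw [integrable_map_measure hsm hm.aemeasurable, Function.comp_def, hfun]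
    exact int_sq_stdG.const_mul _
  · rw [integral_map hm.aemeasurable hsm, hfun, integral_const_mul]
    rfl

variable {Ω : Type*} [MeasureSpace Ω] [IsProbabilityMeasure (ℙ : Measure Ω)]

lemma rv_abs {X : Ω → ℝ} (hm : Measurable X) {w : ℝ≥0}
    (hv : Measure.map X ℙ = gaussianReal 0 w) :
    Integrable (fun ω => |X ω|) ℙ ∧ ∫ ω, |X ω| ∂ℙ = Real.sqrt w * K1 := by
  have h1 : Integrable (fun x => |x|) (Measure.map X ℙ) := by rw [hv]; exact (int_abs_gauss w).1
  constructor
  · rw [integrable_map_measure measurable_abs.aestronglyMeasurable hm.aemeasurable] at h1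
    exact h1
  · rw [← integral_map hm.aemeasurable measurable_abs.aestronglyMeasurable, hv]
    exact (int_abs_gauss w).2

lemma rv_sq {X : Ω → ℝ} (hm : Measurable X) {w : ℝ≥0}
    (hv : Measure.map X ℙ = gaussianReal 0 w) :
    MemLp X 2 ℙ ∧ ∫ ω, (X ω) ^ 2 ∂ℙ = w * K2 := by
  have h1 : Integrable (fun x : ℝ => x ^ 2) (Measure.map X ℙ) := by
    rw [hv]; exact (int_sq_gauss w).1
  rw [integrable_map_measure (hm2).aestronglyMeasurable
    hm.aemeasurable] at h1
  constructor
  · exact (memLp_two_iff_integrable_sq hm.aestronglyMeasurable).2 h1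
  · rw [← integral_map hm.aemeasurable (hm2).aestronglyMeasurable, hv]
    exact (int_sq_gauss w).2

set_option maxHeartbeats 1000000 in
lemma pz (X : ℕ → Ω → ℝ) (hm : ∀ n, Measurable (X n)) (w : ℕ → ℝ≥0)
    (hvar : ∀ n, Measure.map (X n) ℙ = gaussianReal 0 (w n))
    (c : ℕ → ℝ) (hc : ∀ n, 0 ≤ c n) (N : ℕ)
    (hA : 0 < ∑ m ∈ Finset.range N, c m * Real.sqrt (w (m + 1))) :
    K1 ^ 2 / (4 * K2) ≤
      (ℙ {ω | K1 * (∑ m ∈ Finset.range N, c m * Real.sqrt (w (m + 1))) / 2 <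
        ∑ m ∈ Finset.range N, c m * |X (m + 1) ω|}).toReal := by
  set A : ℝ := ∑ m ∈ Finset.range N, c m * Real.sqrt (w (m + 1)) with hAdef
  set S : Ω → ℝ := fun ω => ∑ m ∈ Finset.range N, c m * |X (m + 1) ω| with hSdef
  have hSm : Measurable S := by
    apply Finset.measurable_sum
    intro m _
    exact ((hm (m + 1)).abs.const_mul _)
  have hSnonneg : ∀ ω, 0 ≤ S ω :=
    fun ω => Finset.sum_nonneg fun m _ => mul_nonneg (hc m) (abs_nonneg _)
  -- integrability of each term
  have hint : ∀ m, Integrable (fun ω => c m * |X (m + 1) ω|) ℙ :=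
    fun m => ((rv_abs (hm (m + 1)) (hvar (m + 1))).1).const_mul _
  have hSint : Integrable S ℙ := integrable_finset_sum _ fun m _ => hint m
  -- expectation of S
  have hES : ∫ ω, S ω ∂ℙ = K1 * A := by
    rw [hSdef]
    rw [integral_finset_sum _ fun m _ => hint m]
    rw [hAdef, Finset.mul_sum]
    congr 1
    ext m
    rw [integral_const_mul, (rv_abs (hm (m + 1)) (hvar (m + 1))).2]
    ring
  -- MemLp S 2
  have hL2term : ∀ m, MemLp (fun ω => c m * |X (m + 1) ω|) 2 ℙ := fun m =>
    ((rv_sq (hm (m + 1)) (hvar (m + 1))).1.abs.const_mul _)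
  have hSL2 : MemLp S 2 ℙ := by
    have := memLp_finset_sum' (μ := (ℙ : Measure Ω)) (Finset.range N) fun m _ => hL2term m
    convert this using 1
    ext ω
    simp [hSdef]
  -- second moment bound
  have hcross : ∀ m n, ∫ ω, (c m * |X (m + 1) ω|) * (c n * |X (n + 1) ω|) ∂ℙ ≤
      (c m * Real.sqrt (w (m + 1))) * (c n * Real.sqrt (w (n + 1))) * K2 := by
    intro m n
    have hfm := (rv_sq (hm (m + 1)) (hvar (m + 1))).1
    have hfn := (rv_sq (hm (n + 1)) (hvar (n + 1))).1
    have hH := integral_mul_norm_le_Lp_mul_Lq (μ := (ℙ : Measure Ω))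
      (f := X (m + 1)) (g := X (n + 1)) (p := 2) (q := 2)
      (by constructor <;> norm_num) (by simpa using hfm) (by simpa using hfn)
    simp only [Real.norm_eq_abs] at hH
    norm_num at hH
    have h2 : ∀ k, ∫ ω, (X (k + 1) ω) ^ 2 ∂ℙ = (w (k + 1) : ℝ) * K2 :=
      fun k => (rv_sq (hm (k + 1)) (hvar (k + 1))).2
    rw [h2 m, h2 n] at hH
    have e1 : ∫ ω, (c m * |X (m + 1) ω|) * (c n * |X (n + 1) ω|) ∂ℙ
        = (c m * c n) * ∫ ω, |X (m + 1) ω| * |X (n + 1) ω| ∂ℙ := by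
      rw [← integral_const_mul]
      congr 1; ext ω; ring
    have e2 : ∀ k, ((w (k + 1) : ℝ) * K2) ^ ((1:ℝ)/2) = Real.sqrt (w (k + 1)) * Real.sqrt K2 := by
      intro k
      rw [← Real.sqrt_eq_rpow, Real.sqrt_mul (w (k + 1)).coe_nonneg]
    rw [e2, e2] at hH
    rw [e1]
    have hK2 : Real.sqrt K2 * Real.sqrt K2 = K2 := Real.mul_self_sqrt K2_pos.le
    have hcm := mul_le_mul_of_nonneg_left hH (mul_nonneg (hc m) (hc n))
    calc (c m * c n) * ∫ ω, |X (m + 1) ω| * |X (n + 1) ω| ∂ℙ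
        ≤ (c m * c n) * (Real.sqrt (w (m + 1)) * Real.sqrt K2 *
            (Real.sqrt (w (n + 1)) * Real.sqrt K2)) := hcm
      _ = (c m * Real.sqrt (w (m + 1))) * (c n * Real.sqrt (w (n + 1))) *
            (Real.sqrt K2 * Real.sqrt K2) := by ring
      _ = (c m * Real.sqrt (w (m + 1))) * (c n * Real.sqrt (w (n + 1))) * K2 := by rw [hK2]
  -- integrability of products
  have hintprod : ∀ m n, Integrable
      (fun ω => (c m * |X (m + 1) ω|) * (c n * |X (n + 1) ω|)) ℙ := by
    intro m n
    have := (hL2term n).smul (hL2term m) (p := 2) (q := 2) (r := 1)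
    rw [memLp_one_iff_integrable] at this
    simpa [smul_eq_mul, Pi.mul_def] using this
  -- second moment of S
  have hES2 : ∫ ω, S ω ^ 2 ∂ℙ ≤ K2 * A ^ 2 := by
    have hexp : ∀ ω, S ω ^ 2 = ∑ m ∈ Finset.range N, ∑ n ∈ Finset.range N,
        (c m * |X (m + 1) ω|) * (c n * |X (n + 1) ω|) := by
      intro ω
      rw [hSdef, sq, Finset.sum_mul_sum]
    calc ∫ ω, S ω ^ 2 ∂ℙ
        = ∑ m ∈ Finset.range N, ∑ n ∈ Finset.range N,
            ∫ ω, (c m * |X (m + 1) ω|) * (c n * |X (n + 1) ω|) ∂ℙ := by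
          rw [show (fun ω => S ω ^ 2) = fun ω => ∑ m ∈ Finset.range N, ∑ n ∈ Finset.range N,
            (c m * |X (m + 1) ω|) * (c n * |X (n + 1) ω|) from funext hexp]
          rw [integral_finset_sum _ fun m _ => integrable_finset_sum _ fun n _ => hintprod m n]
          exact Finset.sum_congr rfl fun m _ => integral_finset_sum _ fun n _ => hintprod m n
      _ ≤ ∑ m ∈ Finset.range N, ∑ n ∈ Finset.range N,
            (c m * Real.sqrt (w (m + 1))) * (c n * Real.sqrt (w (n + 1))) * K2 :=
          Finset.sum_le_sum fun m _ => Finset.sum_le_sum fun n _ => hcross m n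
      _ = K2 * A ^ 2 := by
          have hAA : K2 * A ^ 2 = ∑ m ∈ Finset.range N, ∑ n ∈ Finset.range N,
              (c m * Real.sqrt (w (m + 1))) * (c n * Real.sqrt (w (n + 1))) * K2 := by
            rw [hAdef, sq, Finset.sum_mul_sum, Finset.mul_sum]
            refine Finset.sum_congr rfl fun m _ => ?_
            rw [Finset.mul_sum]
            exact Finset.sum_congr rfl fun n _ => by ring
          exact hAA.symm
  -- the event
  set a : ℝ := K1 * A / 2 with hadef
  have ha0 : 0 ≤ a := by
    have h1 := K1_pos
    rw [hadef]; positivity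
  set E : Set Ω := {ω | a < S ω} with hEdef
  have hE : MeasurableSet E := measurableSet_lt measurable_const hSm
  have hsplit : ∫ ω in E, S ω ∂ℙ + ∫ ω in Eᶜ, S ω ∂ℙ = ∫ ω, S ω ∂ℙ :=
    integral_add_compl hE hSint
  have hcompl : ∫ ω in Eᶜ, S ω ∂ℙ ≤ a := by
    have h1 : ∫ ω in Eᶜ, S ω ∂ℙ ≤ ∫ _ω in Eᶜ, a ∂ℙ := by
      refine setIntegral_mono_on hSint.integrableOn
        (integrableOn_const) hE.compl ?_
      intro ω hω
      have : ¬ a < S ω := hω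
      linarith [not_lt.1 this]
    have h2 : ∫ _ω in Eᶜ, a ∂ℙ = (ℙ Eᶜ).toReal * a := by
      rw [setIntegral_const, smul_eq_mul, measureReal_def]
    have h3 : (ℙ Eᶜ).toReal ≤ 1 := by
      have := prob_le_one (μ := (ℙ : Measure Ω)) (s := Eᶜ)
      simpa using ENNReal.toReal_mono (by norm_num) this
    calc ∫ ω in Eᶜ, S ω ∂ℙ ≤ (ℙ Eᶜ).toReal * a := by rw [← h2]; exact h1
      _ ≤ 1 * a := mul_le_mul_of_nonneg_right h3 ha0
      _ = a := one_mul a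
  have hEint : a ≤ ∫ ω in E, S ω ∂ℙ := by
    have : ∫ ω, S ω ∂ℙ = K1 * A := hES
    have h2a : a + a = K1 * A := by rw [hadef]; ring
    linarith
  -- Hölder with indicator
  have hind : ∫ ω in E, S ω ∂ℙ = ∫ ω, S ω * E.indicator (fun _ => (1:ℝ)) ω ∂ℙ := by
    rw [← integral_indicator hE]
    congr 1
    ext ω
    by_cases hω : ω ∈ E <;> simp [Set.indicator, hω]
  have hgL2 : MemLp (E.indicator fun _ => (1:ℝ)) (ENNReal.ofReal 2) ℙ := by
    rw [show ENNReal.ofReal 2 = 2 by norm_num]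
    exact memLp_indicator_const 2 hE 1 (Or.inr (measure_ne_top _ _))
  have hHolder := integral_mul_le_Lp_mul_Lq_of_nonneg (μ := (ℙ : Measure Ω))
    (p := 2) (q := 2) (by constructor <;> norm_num)
    (Eventually.of_forall hSnonneg)
    (Eventually.of_forall fun ω => Set.indicator_nonneg (fun _ _ => zero_le_one) ω)
    (by rw [show ENNReal.ofReal 2 = 2 by norm_num]; exact hSL2) hgL2
  have hg2 : ∫ ω, (E.indicator (fun _ => (1:ℝ)) ω) ^ (2:ℝ) ∂ℙ = (ℙ E).toReal := by
    have : (fun ω => (E.indicator (fun _ => (1:ℝ)) ω) ^ (2:ℝ)) =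
        E.indicator (fun _ => (1:ℝ)) := by
      ext ω
      by_cases hω : ω ∈ E <;> simp [Set.indicator, hω]
    rw [this, integral_indicator_const _ hE, smul_eq_mul, mul_one, measureReal_def]
  have hf2 : ∫ ω, (S ω) ^ (2:ℝ) ∂ℙ = ∫ ω, (S ω) ^ 2 ∂ℙ := by
    congr 1
    ext ω
    rw [show ((2:ℝ)) = ((2:ℕ):ℝ) by norm_num, Real.rpow_natCast]
  rw [hg2, hf2] at hHolder
  -- combine
  set P : ℝ := (ℙ E).toReal with hPdef
  have hP0 : 0 ≤ P := ENNReal.toReal_nonneg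
  have key : a ≤ (K2 * A ^ 2) ^ ((1:ℝ)/2) * P ^ ((1:ℝ)/2) := by
    have h1 : (∫ ω, (S ω) ^ 2 ∂ℙ) ^ ((1:ℝ)/2) ≤ (K2 * A ^ 2) ^ ((1:ℝ)/2) :=
      Real.rpow_le_rpow (integral_nonneg fun ω => sq_nonneg _) hES2 (by norm_num)
    have h2 : (0:ℝ) ≤ P ^ ((1:ℝ)/2) := Real.rpow_nonneg hP0 _
    calc a ≤ ∫ ω in E, S ω ∂ℙ := hEint
      _ = ∫ ω, S ω * E.indicator (fun _ => (1:ℝ)) ω ∂ℙ := hind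
      _ ≤ (∫ ω, (S ω) ^ 2 ∂ℙ) ^ ((1:ℝ)/2) * P ^ ((1:ℝ)/2) := hHolder
      _ ≤ (K2 * A ^ 2) ^ ((1:ℝ)/2) * P ^ ((1:ℝ)/2) := mul_le_mul_of_nonneg_right h1 h2
  have hsqrtK2A : (K2 * A ^ 2) ^ ((1:ℝ)/2) = Real.sqrt K2 * A := by
    rw [← Real.sqrt_eq_rpow, Real.sqrt_mul K2_pos.le, Real.sqrt_sq hA.le]
  have hsqrtP : P ^ ((1:ℝ)/2) = Real.sqrt P := (Real.sqrt_eq_rpow P).symm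
  rw [hsqrtK2A, hsqrtP, hadef] at key
  -- conclude
  have hK1 := K1_pos
  have hK2 := K2_pos
  have hsK2 : Real.sqrt K2 * Real.sqrt K2 = K2 := Real.mul_self_sqrt K2_pos.le
  have hsP : Real.sqrt P * Real.sqrt P = P := Real.mul_self_sqrt hP0
  have hsK2nn : 0 ≤ Real.sqrt K2 := Real.sqrt_nonneg _
  have hsPnn : 0 ≤ Real.sqrt P := Real.sqrt_nonneg _
  have hhalf : K1 / 2 ≤ Real.sqrt K2 * Real.sqrt P := by
    have := key
    have hA' : 0 < A := hA
    nlinarith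
  rw [div_le_iff₀ (by positivity)]
  nlinarith [mul_le_mul hhalf hhalf (by positivity) (by positivity)]

set_option maxHeartbeats 1000000 in
theorem stmt14' {Ω : Type*} [MeasureSpace Ω] [IsProbabilityMeasure (ℙ : Measure Ω)]
    (X : ℕ → Ω → ℝ) (hXm : ∀ n, Measurable (X n))
    (v : ℕ → ℝ≥0)
    (hvar : ∀ n, Measure.map (X n) ℙ = ProbabilityTheory.gaussianReal 0 (v n))
    (h : ∀ a : ℕ → ℂ, (Summable fun m : ℕ => ‖a (m + 1)‖ ^ 2) →
      ∀ᵐ ω ∂ℙ, ∀ r₀ : ℝ, 0 < r₀ → r₀ < 1 →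
        Summable fun m : ℕ =>
          ‖a (m + 1)‖ * |X (m + 1) ω| * r₀ ^ ((Nat.factorization (m+1)).sum fun p k => p.primeCounting * k))
    (r : ℝ) (hr0 : 0 < r) (hr1 : r < 1) :
    Summable fun m : ℕ => (v (m + 1) : ℝ) *
      r ^ (2 * ((Nat.factorization (m+1)).sum fun p k => p.primeCounting * k)) := by
  set α : ℕ → ℕ := fun n => (Nat.factorization n).sum fun p k => p.primeCounting * k with hα
  by_contra hns
  set t : ℕ → ℝ := fun m => Real.sqrt (v (m + 1)) * r ^ α (m + 1) with ht
  have ht0 : ∀ m, 0 ≤ t m := fun m => mul_nonneg (Real.sqrt_nonneg _) (pow_nonneg hr0.le _)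
  have htsq : ∀ m, t m ^ 2 = (v (m + 1) : ℝ) * r ^ (2 * α (m + 1)) := by
    intro m
    rw [ht]
    simp only
    rw [mul_pow, Real.sq_sqrt (v (m + 1)).coe_nonneg, pow_mul']
  have hns' : ¬ Summable fun m => t m ^ 2 := by
    intro hcon
    exact hns (by simpa [htsq] using hcon)
  set u : ℕ → ℝ := fun m => t m ^ 2 with hu
  set P : ℕ → ℝ := fun N => 1 + ∑ m ∈ Finset.range N, u m with hP
  have hu0 : ∀ m, 0 ≤ u m := fun m => sq_nonneg _
  have hPpos : ∀ N, 0 < P N := by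
    intro N
    have : 0 ≤ ∑ m ∈ Finset.range N, u m := Finset.sum_nonneg fun m _ => hu0 m
    rw [hP]; dsimp only; linarith
  have hPmono : Monotone P := by
    intro N M hNM
    rw [hP]; dsimp only
    have := Finset.sum_le_sum_of_subset_of_nonneg
      (Finset.range_subset_range.2 hNM) (fun m _ _ => hu0 m)
    linarith
  have hPsucc : ∀ m, P (m + 1) - P m = u m := by
    intro m
    rw [hP]; dsimp only
    rw [Finset.sum_range_succ]; ring
  have hPtop : Tendsto P atTop atTop := by
    rw [hP]
    apply tendsto_atTop_add_const_left
    exact (not_summable_iff_tendsto_nat_atTop_of_nonneg hu0).1 hns'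
  -- the ℓ² sequence
  set a : ℕ → ℂ := fun n => ((if n = 0 then (0:ℝ) else t (n - 1) / P n : ℝ) : ℂ) with ha
  have habs : ∀ m, ‖a (m + 1)‖ = t m / P (m + 1) := by
    intro m
    rw [ha]
    simp only [Nat.succ_ne_zero, if_false, Nat.add_sub_cancel, Complex.norm_real]
    exact Real.norm_of_nonneg (div_nonneg (ht0 m) (hPpos _).le)
  have htel : ∀ m, (t m / P (m + 1)) ^ 2 ≤ 1 / P m - 1 / P (m + 1) := by
    intro m
    have e1 : (t m / P (m + 1)) ^ 2 = u m / (P (m + 1)) ^ 2 := by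
      rw [div_pow]
    have e2 : 1 / P m - 1 / P (m + 1) = u m / (P m * P (m + 1)) := by
      rw [div_sub_div _ _ (hPpos m).ne' (hPpos (m + 1)).ne', one_mul, mul_one, ← hPsucc m]
    rw [e1, e2]
    apply div_le_div_of_nonneg_left (hu0 m) (mul_pos (hPpos m) (hPpos (m + 1)))
    rw [sq]
    exact mul_le_mul_of_nonneg_right (hPmono (Nat.le_succ m)) (hPpos (m + 1)).le
  have hsumtel : Summable fun m => 1 / P m - 1 / P (m + 1) := by
    apply summable_of_sum_range_le (c := 1 / P 0)
    · intro m
      have h1 : 1 / P (m + 1) ≤ 1 / P m :=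
        one_div_le_one_div_of_le (hPpos m) (hPmono (Nat.le_succ m))
      linarith
    · intro n
      rw [Finset.sum_range_sub' (f := fun m => 1 / P m)]
      have : 0 ≤ 1 / P n := by positivity
      linarith
  have hl2 : Summable fun m : ℕ => ‖a (m + 1)‖ ^ 2 := by
    apply Summable.of_nonneg_of_le (fun m => sq_nonneg _) _ hsumtel
    intro m
    rw [habs m]
    exact htel m
  -- the coefficients
  set c : ℕ → ℝ := fun m => (t m / P (m + 1)) * r ^ α (m + 1) with hc
  have hc0 : ∀ m, 0 ≤ c m :=
    fun m => mul_nonneg (div_nonneg (ht0 m) (hPpos _).le) (pow_nonneg hr0.le _)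
  have hd : ∀ m, c m * Real.sqrt (v (m + 1)) = u m / P (m + 1) := by
    intro m
    rw [hc, hu, ht]
    dsimp only
    field_simp
  have hd0 : ∀ m, 0 ≤ c m * Real.sqrt (v (m + 1)) :=
    fun m => mul_nonneg (hc0 m) (Real.sqrt_nonneg _)
  -- divergence of A N
  have hAtop : Tendsto (fun N => ∑ m ∈ Finset.range N, c m * Real.sqrt (v (m + 1)))
      atTop atTop := by
    apply (not_summable_iff_tendsto_nat_atTop_of_nonneg hd0).1
    intro hd'
    set l : ℝ := ∑' m, c m * Real.sqrt (v (m + 1)) with hl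
    have hDle : ∀ N, ∑ m ∈ Finset.range N, c m * Real.sqrt (v (m + 1)) ≤ l :=
      fun N => Summable.sum_le_tsum (Finset.range N) (fun i _ => hd0 i) hd'
    obtain ⟨M, hM⟩ := (hd'.hasSum.tendsto_sum_nat.eventually
      (eventually_gt_nhds (sub_lt_self l one_half_pos))).exists
    obtain ⟨N, hN1, hN2⟩ := ((tendsto_atTop.1 hPtop (2 * P M + 1)).and
      (eventually_ge_atTop M)).exists
    have hPN : 2 * P M < P N := by linarith
    have key : 1 - P M / P N ≤ ∑ m ∈ Finset.Ico M N, c m * Real.sqrt (v (m + 1)) := by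
      have step1 : ∀ m ∈ Finset.Ico M N, u m / P N ≤ c m * Real.sqrt (v (m + 1)) := by
        intro m hm
        rw [hd m]
        apply div_le_div_of_nonneg_left (hu0 m) (hPpos (m + 1))
        exact hPmono (Finset.mem_Ico.1 hm).2
      have step2 : ∑ m ∈ Finset.Ico M N, u m / P N = (P N - P M) / P N := by
        rw [← Finset.sum_div]
        congr 1
        rw [Finset.sum_Ico_eq_sub _ hN2]
        rw [hP]; dsimp only; ring
      calc 1 - P M / P N = (P N - P M) / P N := by
            rw [sub_div, div_self (hPpos N).ne']
        _ = ∑ m ∈ Finset.Ico M N, u m / P N := step2.symm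
        _ ≤ _ := Finset.sum_le_sum step1
    have hsplit : ∑ m ∈ Finset.Ico M N, c m * Real.sqrt (v (m + 1)) =
        (∑ m ∈ Finset.range N, c m * Real.sqrt (v (m + 1))) -
        ∑ m ∈ Finset.range M, c m * Real.sqrt (v (m + 1)) :=
      Finset.sum_Ico_eq_sub _ hN2
    have hhalf : P M / P N < 1 / 2 := by
      rw [div_lt_div_iff₀ (hPpos N) (by norm_num : (0:ℝ) < 2)]
      linarith
    have := hDle N
    rw [hsplit] at key
    linarith
  -- probabilistic contradiction
  have hae : ∀ᵐ ω ∂ℙ, Summable fun m => c m * |X (m + 1) ω| := by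
    filter_upwards [h a hl2] with ω hω
    have hsum := hω r hr0 hr1
    apply hsum.congr
    intro m
    rw [habs m, hc]
    ring
  set Y : ℕ → Ω → ℝ := fun m ω => c m * |X (m + 1) ω| with hY
  have hY0 : ∀ m ω, 0 ≤ Y m ω := fun m ω => mul_nonneg (hc0 m) (abs_nonneg _)
  set W : Ω → ℝ≥0∞ := fun ω => ∑' m, ENNReal.ofReal (Y m ω) with hW
  have hWm : Measurable W := by
    apply Measurable.ennreal_tsum
    intro m
    exact ENNReal.measurable_ofReal.comp (((hXm (m + 1)).abs).const_mul _)
  have hWfin : ∀ᵐ ω ∂ℙ, W ω ≠ ∞ := by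
    filter_upwards [hae] with ω hω
    rw [hW]
    dsimp only
    rw [← ENNReal.ofReal_tsum_of_nonneg (fun m => hY0 m ω) hω]
    exact ENNReal.ofReal_ne_top
  set p : ℝ := K1 ^ 2 / (4 * K2) with hp
  have hppos : 0 < p := by
    have := K1_pos; have := K2_pos
    rw [hp]; positivity
  set s : ℕ → Set Ω := fun n => {ω | (n : ℝ≥0∞) < W ω} with hs
  have hsmeas : ∀ n, MeasurableSet (s n) := fun n => measurableSet_lt measurable_const hWm
  have hanti : Antitone s := by
    intro n m hnm ω hω
    have : ((n : ℝ≥0∞)) ≤ (m : ℝ≥0∞) := by exact_mod_cast hnm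
    exact lt_of_le_of_lt this hω
  have hinter : ℙ (⋂ n, s n) = 0 := by
    have hsub : (⋂ n, s n) ⊆ {ω | W ω = ∞} := by
      intro ω hω
      by_contra hωn
      obtain ⟨n, hn⟩ := ENNReal.exists_nat_gt hωn
      exact absurd (Set.mem_iInter.1 hω n) (not_lt.2 hn.le)
    apply measure_mono_null hsub
    have := hWfin
    rw [ae_iff] at this
    simpa using this
  have htends : Tendsto (fun n => ℙ (s n)) atTop (𝓝 0) := by
    have := tendsto_measure_iInter_atTop (μ := (ℙ : Measure Ω))
      (fun n => (hsmeas n).nullMeasurableSet) hanti ⟨0, measure_ne_top _ _⟩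
    rw [hinter] at this
    exact this
  obtain ⟨B, hB⟩ := (htends.eventually_lt_const (ENNReal.ofReal_pos.2 hppos)).exists
  -- choose N
  obtain ⟨N, hN1, hN2⟩ := ((tendsto_atTop.1 hAtop (max (2 * ((B : ℝ) + 1) / K1) 1)).and
    (eventually_ge_atTop 0)).exists
  set A : ℝ := ∑ m ∈ Finset.range N, c m * Real.sqrt (v (m + 1)) with hA
  have hApos : 0 < A := lt_of_lt_of_le one_pos (le_trans (le_max_right _ _) hN1)
  have hBA : (B : ℝ) < K1 * A / 2 := by
    have h1 : 2 * ((B : ℝ) + 1) / K1 ≤ A := le_trans (le_max_left _ _) hN1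
    have h2 : 2 * ((B : ℝ) + 1) ≤ K1 * A := by
      rw [div_le_iff₀ K1_pos] at h1
      linarith [h1]
    linarith
  have hpz := pz X hXm v hvar c hc0 N hApos
  have hEsub : {ω | K1 * A / 2 < ∑ m ∈ Finset.range N, c m * |X (m + 1) ω|} ⊆ s B := by
    intro ω hω
    have hω' : K1 * A / 2 < ∑ m ∈ Finset.range N, Y m ω := hω
    have hBsum : (B : ℝ) < ∑ m ∈ Finset.range N, Y m ω := lt_trans hBA hω'
    have hsumpos : 0 < ∑ m ∈ Finset.range N, Y m ω :=
      lt_of_le_of_lt (Nat.cast_nonneg B) hBsum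
    show (B : ℝ≥0∞) < W ω
    calc (B : ℝ≥0∞) = ENNReal.ofReal (B : ℝ) := (ENNReal.ofReal_natCast B).symm
      _ < ENNReal.ofReal (∑ m ∈ Finset.range N, Y m ω) :=
          (ENNReal.ofReal_lt_ofReal_iff hsumpos).2 hBsum
      _ = ∑ m ∈ Finset.range N, ENNReal.ofReal (Y m ω) :=
          ENNReal.ofReal_sum_of_nonneg fun m _ => hY0 m ω
      _ ≤ W ω := ENNReal.sum_le_tsum _
  have hfinal : p ≤ (ℙ (s B)).toReal := by
    refine le_trans hpz ?_
    exact ENNReal.toReal_mono (measure_ne_top _ _) (measure_mono hEsub)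
  have hlt : (ℙ (s B)).toReal < p := by
    have := ENNReal.toReal_lt_toReal (measure_ne_top _ _) ENNReal.ofReal_ne_top |>.2 hB
    rwa [ENNReal.toReal_ofReal hppos.le] at this
  linarith

end Aux

theorem stmt14 {Ω : Type*} [MeasureSpace Ω] [IsProbabilityMeasure (ℙ : Measure Ω)]
    (X : ℕ → Ω → ℝ) (hX : IsCenteredGaussianProcess X)
    (v : ℕ → ℝ≥0)
    (hvar : ∀ n, Measure.map (X n) ℙ = ProbabilityTheory.gaussianReal 0 (v n))
    (h : ∀ a : ℕ → ℂ, (Summable fun m : ℕ => ‖a (m + 1)‖ ^ 2) →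
      ∀ᵐ ω ∂ℙ, ∀ r₀ : ℝ, 0 < r₀ → r₀ < 1 →
        Summable fun m : ℕ =>
          ‖a (m + 1)‖ * |X (m + 1) ω| * r₀ ^ alphaStar (m + 1))
    (r : ℝ) (hr0 : 0 < r) (hr1 : r < 1) :
    Summable fun m : ℕ => (v (m + 1) : ℝ) * r ^ (2 * alphaStar (m + 1)) := by
  exact stmt14' X hX.1 v hvar h r hr0 hr1
end
end

section
/- Let 1 ≤ p < ∞ and let a : ℕ → ℂ satisfy ∑_{n=1}^∞ |a_n| r^{|α(n)|_*} < ∞ for every 0 < r < 1. Then for every integer n ≥ 1, |a_n| ≤ sup_{0<r<1} ( ∫_{𝕋^∞} |∑_{k=1}^∞ a_k r^{|α(k)|_*} w^{α(k)}|^p dm_∞(w) )^{1/p}. -/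
open MeasureTheory Filter
open scoped ENNReal NNReal Topology ProbabilityTheory

noncomputable section

instance : MeasurableSpace Circle := borel Circle
instance : BorelSpace Circle := ⟨rfl⟩

/-- The infinite torus `𝕋^∞`, coordinate `j` corresponding to the `(j+1)`-st prime. -/
abbrev TorusInf : Type := ℕ → Circle

/-- The Haar probability measure `m_∞` on `𝕋^∞` (the product of the normalized
arc-length measures on the circles). -/
def mInf : Measure TorusInf := Measure.haarMeasure ⊤

instance : IsProbabilityMeasure mInf :=
  ⟨by simpa [mInf] using Measure.haarMeasure_self (K₀ := (⊤ : TopologicalSpace.PositiveCompacts TorusInf))⟩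

/-- The monomial `w^{α(n)} = w₁^{α₁} ⋯ w_k^{α_k}` for `n = p₁^{α₁} ⋯ p_k^{α_k}`. -/
def monom (w : TorusInf) (n : ℕ) : ℂ :=
  n.factorization.prod fun p k => (w (p.primeCounting - 1) : ℂ) ^ k

/-- The value at `w ∈ 𝕋^∞` of `∑_{n≥1} b_n r^{|α(n)|_*} w^{α(n)}`. -/
def dilSeries (b : ℕ → ℂ) (r : ℝ) (w : TorusInf) : ℂ :=
  ∑' m : ℕ, b (m + 1) * (r : ℂ) ^ alphaStar (m + 1) * monom w (m + 1)

/-- `sup_{0<r<1} ∫_{𝕋^∞} |∑_{n≥1} b_n r^{|α(n)|_*} w^{α(n)}|^p dm_∞(w)`, valued in `[0,∞]`. -/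
def hardyNormP (p : ℝ) (b : ℕ → ℂ) : ℝ≥0∞ :=
  ⨆ r ∈ Set.Ioo (0 : ℝ) 1, ∫⁻ w, ENNReal.ofReal (‖dilSeries b r w‖ ^ p) ∂mInf

/-- `b` (indexed by `n ≥ 1`) is the coefficient sequence of a function in `H_∞^p`. -/
def IsHpCoeff (p : ℝ) (b : ℕ → ℂ) : Prop :=
  (∀ r : ℝ, 0 < r → r < 1 →
    Summable fun m : ℕ => ‖b (m + 1)‖ * r ^ alphaStar (m + 1)) ∧
  hardyNormP p b < ⊤

instance : mInf.IsMulLeftInvariant := by unfold mInf; infer_instance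

lemma abs_monom (w : TorusInf) (k : ℕ) : ‖monom w k‖ = 1 := by
  unfold monom Finsupp.prod
  rw [norm_prod]
  simp [Circle.norm_coe]

lemma continuous_monom (k : ℕ) : Continuous fun w : TorusInf => monom w k := by
  unfold monom Finsupp.prod
  exact continuous_finset_prod _ fun p _ =>
    ((continuous_subtype_val.comp (continuous_apply _)).pow _)

lemma monom_mul (g w : TorusInf) (k : ℕ) : monom (g * w) k = monom g k * monom w k := by
  unfold monom
  rw [← Finsupp.prod_mul]
  refine Finsupp.prod_congr fun p _ => ?_
  rw [Pi.mul_apply]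
  push_cast
  ring

lemma primeCounting_inj {p q : ℕ} (hp : p.Prime) (hq : q.Prime)
    (h : p.primeCounting - 1 = q.primeCounting - 1) : p = q := by
  have key : ∀ {a b : ℕ}, a.Prime → b.Prime → a < b →
      a.primeCounting < b.primeCounting := by
    intro a b ha hb hab
    unfold Nat.primeCounting Nat.primeCounting'
    calc Nat.count Nat.Prime (a + 1) ≤ Nat.count Nat.Prime b :=
          Nat.count_monotone _ hab
    _ < Nat.count Nat.Prime (b + 1) := Nat.count_lt_count_succ_iff.mpr hb
  have pos : ∀ {a : ℕ}, a.Prime → 0 < a.primeCounting := by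
    intro a ha
    unfold Nat.primeCounting Nat.primeCounting'
    exact lt_of_le_of_lt (Nat.zero_le _) (Nat.count_lt_count_succ_iff.mpr ha)
  rcases lt_trichotomy p q with hlt | heq | hgt
  · have := key hp hq hlt; have := pos hp; omega
  · exact heq
  · have := key hq hp hgt; have := pos hq; omega

lemma monom_update (z : Circle) (p : ℕ) (hp : p.Prime) (k : ℕ) :
    monom (Function.update (1 : TorusInf) (p.primeCounting - 1) z) k
      = (z : ℂ) ^ k.factorization p := by
  unfold monom Finsupp.prod
  rw [Finset.prod_eq_single p]
  · simp
  · intro q hq hqp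
    have hq' : q.Prime := Nat.prime_of_mem_primeFactors (by simpa using hq)
    have : q.primeCounting - 1 ≠ p.primeCounting - 1 :=
      fun h => hqp (primeCounting_inj hq' hp h)
    simp [Function.update_of_ne this]
  · intro hp'
    have : k.factorization p = 0 := Finsupp.notMem_support_iff.mp hp'
    simp [this]

lemma integral_monom_mul_conj (m n : ℕ) (hm : m ≠ 0) (hn : n ≠ 0) :
    ∫ w, monom w m * (starRingEnd ℂ) (monom w n) ∂mInf
      = if m = n then 1 else 0 := by
  by_cases h : m = n
  · subst h
    rw [if_pos rfl]
    have habs : ∀ w : TorusInf, monom w m * (starRingEnd ℂ) (monom w m) = 1 := by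
      intro w
      rw [Complex.mul_conj]
      norm_cast
      rw [Complex.normSq_eq_norm_sq, abs_monom]
      norm_num
    simp only [habs]
    simp
  · rw [if_neg h]
    -- find a prime where factorizations differ
    have hfac : m.factorization ≠ n.factorization := by
      intro he
      exact h (Nat.factorization_inj (by simpa using hm) (by simpa using hn) he)
    obtain ⟨p, hpne⟩ : ∃ p, m.factorization p ≠ n.factorization p := by
      by_contra hc
      push_neg at hc
      exact hfac (Finsupp.ext hc)
    have hp : p.Prime := by
      by_contra hpp
      rw [Nat.factorization_eq_zero_of_not_prime m hpp,
        Nat.factorization_eq_zero_of_not_prime n hpp] at hpne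
      exact hpne rfl
    set d : ℤ := (m.factorization p : ℤ) - (n.factorization p : ℤ) with hd
    have hd0 : d ≠ 0 := by
      simp only [hd, sub_ne_zero]
      exact_mod_cast hpne
    set t : ℝ := Real.pi / (d : ℝ) with ht
    set g : TorusInf := Function.update (1 : TorusInf) (p.primeCounting - 1) (Circle.exp t)
      with hg
    set χ : TorusInf → ℂ := fun w => monom w m * (starRingEnd ℂ) (monom w n) with hχ
    have hmulχ : ∀ w : TorusInf, χ (g * w) = χ g * χ w := by
      intro w
      simp only [hχ, monom_mul, map_mul]
      ring
    have hχg : χ g = -1 := by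
      have hdR : ((d : ℝ)) ≠ 0 := Int.cast_ne_zero.mpr hd0
      have key : ∀ s : ℝ, (starRingEnd ℂ) (Complex.exp ((s : ℂ) * Complex.I))
          = Complex.exp (((-s : ℝ) : ℂ) * Complex.I) := by
        intro s
        rw [← Complex.exp_conj, map_mul, Complex.conj_ofReal, Complex.conj_I]
        push_cast
        ring_nf
      have pw : ∀ (k : ℕ) (s : ℝ), (Complex.exp ((s : ℂ) * Complex.I)) ^ k
          = Complex.exp ((((k : ℝ) * s : ℝ) : ℂ) * Complex.I) := by
        intro k s
        rw [← Complex.exp_nat_mul]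
        congr 1
        push_cast
        ring
      have final : ∀ x y : ℝ, x + y = Real.pi →
          Complex.exp ((x : ℂ) * Complex.I) * Complex.exp ((y : ℂ) * Complex.I) = -1 := by
        intro x y hxy
        rw [← Complex.exp_add, ← add_mul, ← Complex.ofReal_add, hxy, Complex.exp_pi_mul_I]
      have hsum : ((m.factorization p : ℝ) * t) + (-((n.factorization p : ℝ) * t)) = Real.pi := by
        have hmn : (m.factorization p : ℝ) - (n.factorization p : ℝ) = (d : ℝ) := by
          rw [hd]; push_cast; ring
        rw [← sub_eq_add_neg, ← sub_mul, hmn, ht, mul_comm, div_mul_cancel₀ _ hdR]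
      simp only [hχ, hg, monom_update _ p hp]
      rw [Circle.coe_exp, pw, pw, key]
      exact final _ _ hsum
    have hinv : ∫ w, χ w ∂mInf = χ g * ∫ w, χ w ∂mInf := by
      conv_lhs => rw [← integral_mul_left_eq_self χ g]
      simp only [hmulχ]
      rw [integral_const_mul]
    have : (1 - χ g) * ∫ w, χ w ∂mInf = 0 := by
      rw [sub_mul, one_mul, ← hinv, sub_self]
    rcases mul_eq_zero.mp this with h1 | h2
    · rw [hχg] at h1; norm_num at h1
    · exact h2

lemma norm_term (b : ℕ → ℂ) (r : ℝ) (hr0 : 0 < r) (w : TorusInf) (m : ℕ) :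
    ‖b (m + 1) * (r : ℂ) ^ alphaStar (m + 1) * monom w (m + 1)‖
      = ‖b (m + 1)‖ * r ^ alphaStar (m + 1) := by
  rw [norm_mul, norm_mul, norm_pow]
  have h1 : ‖monom w (m + 1)‖ = 1 := abs_monom w (m + 1)
  have h2 : ‖(r : ℂ)‖ = r := by
    rw [Complex.norm_real, Real.norm_of_nonneg hr0.le]
  rw [h1, h2, mul_one]

lemma continuous_dilSeries (b : ℕ → ℂ) (r : ℝ) (hr0 : 0 < r)
    (hsum : Summable fun m : ℕ => ‖b (m + 1)‖ * r ^ alphaStar (m + 1)) :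
    Continuous (dilSeries b r) := by
  apply continuous_tsum (fun m => (continuous_const.mul (continuous_monom (m + 1)))) hsum
  intro m w
  exact le_of_eq (norm_term b r hr0 w m)

lemma integral_dilSeries (b : ℕ → ℂ) (r : ℝ) (hr0 : 0 < r)
    (hsum : Summable fun m : ℕ => ‖b (m + 1)‖ * r ^ alphaStar (m + 1))
    (n : ℕ) (hn : 1 ≤ n) :
    ∫ w, dilSeries b r w * (starRingEnd ℂ) (monom w n) ∂mInf
      = b n * (r : ℂ) ^ alphaStar n := by
  set f : ℕ → TorusInf → ℂ := fun m w =>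
    b (m + 1) * (r : ℂ) ^ alphaStar (m + 1) * (monom w (m + 1) * (starRingEnd ℂ) (monom w n))
    with hf
  have hptwise : ∀ w, dilSeries b r w * (starRingEnd ℂ) (monom w n) = ∑' m, f m w := by
    intro w
    rw [dilSeries, ← tsum_mul_right]
    exact tsum_congr fun m => by rw [hf]; ring
  have hmeas : ∀ m, AEStronglyMeasurable (f m) mInf := by
    intro m
    exact (continuous_const.mul ((continuous_monom (m + 1)).mul
      ((continuous_monom n).star))).aestronglyMeasurable
  have hnormf : ∀ m w, ‖f m w‖ = ‖b (m + 1)‖ * r ^ alphaStar (m + 1) := by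
    intro m w
    rw [hf]
    simp only [norm_mul]
    have h1 : ‖monom w (m + 1)‖ = 1 := abs_monom w (m + 1)
    have h2 : ‖(starRingEnd ℂ) (monom w n)‖ = 1 := by
      rw [Complex.norm_conj]
      exact abs_monom w n
    have h3 : ‖(r : ℂ) ^ alphaStar (m + 1)‖ = r ^ alphaStar (m + 1) := by
      rw [norm_pow, Complex.norm_real, Real.norm_of_nonneg hr0.le]
    rw [h1, h2, h3]
    ring
  have hlint : ∀ m, (∫⁻ w, ‖f m w‖₊ ∂mInf)
      = ENNReal.ofReal (‖b (m + 1)‖ * r ^ alphaStar (m + 1)) := by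
    intro m
    have : ∀ w, (‖f m w‖₊ : ℝ≥0∞)
        = ENNReal.ofReal (‖b (m + 1)‖ * r ^ alphaStar (m + 1)) := by
      intro w
      rw [← enorm_eq_nnnorm, ← ofReal_norm, hnormf]
    simp only [this, lintegral_const, measure_univ, mul_one]
  have hfin : (∑' m, ∫⁻ w, ‖f m w‖₊ ∂mInf) ≠ ⊤ := by
    simp only [hlint]
    rw [← ENNReal.ofReal_tsum_of_nonneg (fun m => by positivity) hsum]
    exact ENNReal.ofReal_ne_top
  calc ∫ w, dilSeries b r w * (starRingEnd ℂ) (monom w n) ∂mInf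
      = ∫ w, ∑' m, f m w ∂mInf := by simp only [hptwise]
    _ = ∑' m, ∫ w, f m w ∂mInf := integral_tsum hmeas hfin
    _ = ∑' m, b (m + 1) * (r : ℂ) ^ alphaStar (m + 1) * (if m + 1 = n then 1 else 0) := by
        refine tsum_congr fun m => ?_
        simp only [hf]
        rw [integral_const_mul, integral_monom_mul_conj (m + 1) n (Nat.succ_ne_zero m) (by omega)]
    _ = b n * (r : ℂ) ^ alphaStar n := by
        rw [tsum_eq_single (n - 1)]
        · rw [if_pos (by omega)]
          have h : n - 1 + 1 = n := by omega
          rw [h, mul_one]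
        · intro m hm
          rw [if_neg (by omega), mul_zero]

lemma norm_dilSeries_le (b : ℕ → ℂ) (r : ℝ) (hr0 : 0 < r)
    (hsum : Summable fun m : ℕ => ‖b (m + 1)‖ * r ^ alphaStar (m + 1))
    (w : TorusInf) :
    ‖dilSeries b r w‖ ≤ ∑' m, ‖b (m + 1)‖ * r ^ alphaStar (m + 1) := by
  have hs : Summable fun m : ℕ =>
      ‖b (m + 1) * (r : ℂ) ^ alphaStar (m + 1) * monom w (m + 1)‖ :=
    hsum.congr fun m => (norm_term b r hr0 w m).symm
  refine (norm_tsum_le_tsum_norm hs).trans (le_of_eq ?_)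
  exact tsum_congr fun m => norm_term b r hr0 w m

lemma per_r (p : ℝ) (hp : 1 ≤ p) (b : ℕ → ℂ) (r : ℝ) (hr0 : 0 < r) (hr1 : r < 1)
    (hsum : Summable fun m : ℕ => ‖b (m + 1)‖ * r ^ alphaStar (m + 1))
    (n : ℕ) (hn : 1 ≤ n) :
    ENNReal.ofReal (‖b n‖ * r ^ alphaStar n)
      ≤ (∫⁻ w, ENNReal.ofReal (‖dilSeries b r w‖ ^ p) ∂mInf) ^ (1 / p) := by
  have hp0 : (0 : ℝ) < p := lt_of_lt_of_le one_pos hp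
  have hFc : Continuous (dilSeries b r) := continuous_dilSeries b r hr0 hsum
  have hFm : AEStronglyMeasurable (dilSeries b r) mInf := hFc.aestronglyMeasurable
  set C : ℝ := ∑' m, ‖b (m + 1)‖ * r ^ alphaStar (m + 1) with hC
  have hint : Integrable (dilSeries b r) mInf := by
    refine (integrable_const C).mono' hFm (Filter.Eventually.of_forall fun w => ?_)
    exact norm_dilSeries_le b r hr0 hsum w
  -- step 1 : the coefficient as an integral
  have step1 : ‖b n‖ * r ^ alphaStar n ≤ ∫ w, ‖dilSeries b r w‖ ∂mInf := by
    have e1 : ‖b n‖ * r ^ alphaStar n = ‖b n * (r : ℂ) ^ alphaStar n‖ := by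
      rw [norm_mul, norm_pow, Complex.norm_real, Real.norm_of_nonneg hr0.le]
    rw [e1, ← integral_dilSeries b r hr0 hsum n hn]
    refine (norm_integral_le_integral_norm _).trans (le_of_eq ?_)
    refine integral_congr_ae (Filter.Eventually.of_forall fun w => ?_)
    show ‖dilSeries b r w * (starRingEnd ℂ) (monom w n)‖ = ‖dilSeries b r w‖
    rw [norm_mul]
    have h2 : ‖(starRingEnd ℂ) (monom w n)‖ = 1 := by
      rw [Complex.norm_conj]
      exact abs_monom w n
    rw [h2, mul_one]
  -- step 2 : pass to lintegral / eLpNorm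
  have hq0 : ENNReal.ofReal p ≠ 0 := by
    simp [ENNReal.ofReal_eq_zero, not_le, hp0]
  have hq_top : ENNReal.ofReal p ≠ ⊤ := ENNReal.ofReal_ne_top
  have hqR : (ENNReal.ofReal p).toReal = p := ENNReal.toReal_ofReal hp0.le
  have step2 : ENNReal.ofReal (‖b n‖ * r ^ alphaStar n)
      ≤ eLpNorm (dilSeries b r) (ENNReal.ofReal p) mInf := by
    calc ENNReal.ofReal (‖b n‖ * r ^ alphaStar n)
        ≤ ENNReal.ofReal (∫ w, ‖dilSeries b r w‖ ∂mInf) := ENNReal.ofReal_le_ofReal step1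
      _ = ∫⁻ w, ‖dilSeries b r w‖₊ ∂mInf := ofReal_integral_norm_eq_lintegral_enorm hint
      _ = eLpNorm (dilSeries b r) 1 mInf := by rw [eLpNorm_one_eq_lintegral_enorm]; rfl
      _ ≤ eLpNorm (dilSeries b r) (ENNReal.ofReal p) mInf :=
          eLpNorm_le_eLpNorm_of_exponent_le (by
            rw [← ENNReal.ofReal_one]
            exact ENNReal.ofReal_le_ofReal hp) hFm
  refine step2.trans (le_of_eq ?_)
  rw [eLpNorm_eq_lintegral_rpow_enorm_toReal hq0 hq_top, hqR]
  congr 1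
  refine lintegral_congr fun w => ?_
  rw [← ofReal_norm, ENNReal.ofReal_rpow_of_nonneg (norm_nonneg _) hp0.le]

theorem stmt15 (p : ℝ) (hp : 1 ≤ p) (a : ℕ → ℂ)
    (ha : ∀ r : ℝ, 0 < r → r < 1 →
      Summable fun m : ℕ => ‖a (m + 1)‖ * r ^ alphaStar (m + 1))
    (n : ℕ) (hn : 1 ≤ n) :
    ENNReal.ofReal (‖a n‖) ≤
      ⨆ r ∈ Set.Ioo (0 : ℝ) 1,
        (∫⁻ w, ENNReal.ofReal (‖dilSeries a r w‖ ^ p) ∂mInf) ^ (1 / p) := by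
  set S := ⨆ r ∈ Set.Ioo (0 : ℝ) 1,
    (∫⁻ w, ENNReal.ofReal (‖dilSeries a r w‖ ^ p) ∂mInf) ^ (1 / p) with hS
  have hbound : ∀ r ∈ Set.Ioo (0 : ℝ) 1,
      ENNReal.ofReal (‖a n‖ * r ^ alphaStar n) ≤ S := by
    intro r hr
    refine (per_r p hp a r hr.1 hr.2 (ha r hr.1 hr.2) n hn).trans ?_
    rw [hS]
    exact le_iSup₂ (f := fun (r : ℝ) (_ : r ∈ Set.Ioo (0 : ℝ) 1) =>
      (∫⁻ w, ENNReal.ofReal (‖dilSeries a r w‖ ^ p) ∂mInf) ^ (1 / p)) r hr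
  haveI : (𝓝[Set.Ioo (0 : ℝ) 1] (1 : ℝ)).NeBot := by
    apply mem_closure_iff_nhdsWithin_neBot.mp
    rw [closure_Ioo (by norm_num : (0 : ℝ) ≠ 1)]
    exact ⟨by norm_num, le_refl 1⟩
  have htend : Tendsto (fun r : ℝ => ENNReal.ofReal (‖a n‖ * r ^ alphaStar n))
      (𝓝[Set.Ioo (0 : ℝ) 1] 1) (𝓝 (ENNReal.ofReal (‖a n‖))) := by
    have hc : Continuous fun r : ℝ => ENNReal.ofReal (‖a n‖ * r ^ alphaStar n) :=
      ENNReal.continuous_ofReal.comp (continuous_const.mul (continuous_pow _))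
    have h := (hc.tendsto 1).mono_left (nhdsWithin_le_nhds (s := Set.Ioo (0 : ℝ) 1))
    simpa using h
  exact le_of_tendsto htend (eventually_nhdsWithin_of_forall hbound)
end
end
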